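/- Let X, Y be topological spaces, Z a metric space, f : X × Y → Z. Suppose there are a sequence of locally finite open covers (U_{i,n} : i ∈ I_n) of X and points x_{i,n} ∈ X such that: (a) whenever x ∈ U_{i_n,n} for all n, then x_{i_n,n} → x; (b) f(·,y) is continuous for each y; (c) f(x_{i,n}, ·) is continuous for each i,n. Then for every closed set F ⊆ Z, writing F = ⋂_m G_m with G_m open and cl(G_{m+1}) ⊆ G_m, one has f⁻¹(F) = ⋂_{m=1}^∞ ⋃_{n≥m} ⋃_{i∈I_n} U_{i,n} × (f(x_{i,n},·))⁻¹(G_m). -/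

import Mathlib

open Filter Set

/-- The key identity in the Lebesgue classification theorem: under the strong
PP-structure on `X` and separate continuity assumptions on `f`, for a closed
`F = ⋂ m, G m` with `G m` open and `closure (G (m+1)) ⊆ G m`, one has
`f ⁻¹' F = ⋂ m, ⋃_{n ≥ m}, ⋃ i, U n i ×ˢ (f (x n i, ·)) ⁻¹' (G m)`. -/
theorem vnsc_preimage_identity {X Y Z : Type*} [TopologicalSpace X]
    [TopologicalSpace Y] [MetricSpace Z] (f : X × Y → Z)
    (ι : ℕ → Type*) (U : (n : ℕ) → ι n → Set X) (p : (n : ℕ) → ι n → X)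
    (hopen : ∀ n i, IsOpen (U n i)) (hlf : ∀ n, LocallyFinite (U n))
    (hcov : ∀ n, ⋃ i, U n i = univ)
    (hconv : ∀ (x : X) (idx : (n : ℕ) → ι n), (∀ n, x ∈ U n (idx n)) →
      Tendsto (fun n => p n (idx n)) atTop (nhds x))
    (hy : ∀ y : Y, Continuous fun x => f (x, y))
    (hp : ∀ (n : ℕ) (i : ι n), Continuous fun y => f (p n i, y))
    (F : Set Z) (hF : IsClosed F) (G : ℕ → Set Z) (hG : ∀ m, IsOpen (G m))
    (hmono : ∀ m, closure (G (m + 1)) ⊆ G m) (hFeq : F = ⋂ m, G m) :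
    f ⁻¹' F = ⋂ m : ℕ, ⋃ n : ℕ, ⋃ (_ : m ≤ n), ⋃ i : ι n,
      (U n i) ×ˢ ((fun y => f (p n i, y)) ⁻¹' G m) := by
  have hanti : Antitone G :=
    antitone_nat_of_succ_le fun m => subset_closure.trans (hmono m)
  have hcovx : ∀ (x : X) (n : ℕ), ∃ i, x ∈ U n i := by
    intro x n
    have := (hcov n).symm ▸ mem_univ x
    simpa using this
  ext ⟨x, y⟩
  simp only [mem_preimage, mem_iInter, mem_iUnion, mem_prod, mem_preimage]
  constructor
  · intro hxy m
    choose idx hidx using hcovx x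
    have htend : Tendsto (fun n => f (p n (idx n), y)) atTop (nhds (f (x, y))) :=
      ((hy y).tendsto x).comp (hconv x idx hidx)
    have hGm : f (x, y) ∈ G m := by
      rw [hFeq] at hxy; exact mem_iInter.1 hxy m
    have hev : ∀ᶠ n in atTop, f (p n (idx n), y) ∈ G m :=
      htend.eventually ((hG m).eventually_mem hGm)
    obtain ⟨n, hn1, hn2⟩ := (hev.and (eventually_ge_atTop m)).exists
    exact ⟨n, hn2, idx n, hidx n, hn1⟩
  · intro h
    choose nf hge If hU hGmem using h
    have hkey : ∀ n, ∃ i, x ∈ U n i ∧ ∀ m, nf m = n → f (p n i, y) ∈ G m := by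
      intro n
      by_cases hne : (setOf fun m => nf m = n).Nonempty
      · have hfin : (setOf fun m => nf m = n).Finite := by
          apply (finite_Iic n).subset
          intro m hm
          exact mem_Iic.2 (hm ▸ hge m)
        obtain ⟨M, hMmem, hMmax⟩ := hfin.exists_maximalFor id _ hne
        change nf M = n at hMmem
        subst hMmem
        refine ⟨If M, hU M, fun m hm => ?_⟩
        have hmM : m ≤ M := by
          by_contra hlt
          exact hlt (hMmax hm (le_of_not_ge hlt))
        exact hanti hmM (hGmem M)
      · obtain ⟨i, hi⟩ := hcovx x n
        exact ⟨i, hi, fun m hm => absurd ⟨m, hm⟩ hne⟩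
    choose idx hidxU hidxG using hkey
    have hsub : Tendsto nf atTop atTop := tendsto_atTop_mono hge tendsto_id
    have h2 : Tendsto (fun m => f (p (nf m) (idx (nf m)), y)) atTop (nhds (f (x, y))) :=
      ((hy y).tendsto x).comp ((hconv x idx hidxU).comp hsub)
    have hmem : ∀ m, f (p (nf m) (idx (nf m)), y) ∈ G m := fun m => hidxG (nf m) m rfl
    rw [hFeq, mem_iInter]
    intro m0
    apply hmono m0
    refine mem_closure_of_tendsto h2 ?_
    filter_upwards [eventually_ge_atTop (m0 + 1)] with m hm
    exact hanti hm (hmem m)
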